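/- For every bounded linear operator A on a complex Hilbert space, ‖ |A||A*| + |A*||A| ‖ ≤ 2 ‖A²‖. -/

import Mathlib

variable {H : Type*} [NormedAddCommGroup H] [InnerProductSpace ℂ H] [CompleteSpace H]

/-- The numerical radius of a bounded linear operator. -/
noncomputable def numRadius (A : H →L[ℂ] H) : ℝ :=
  ⨆ x : {x : H // ‖x‖ = 1}, ‖(inner ℂ (A x) (x : H) : ℂ)‖

/-- The absolute value |A| = (A*A)^(1/2). -/
noncomputable def absOp (A : H →L[ℂ] H) : H →L[ℂ] H :=
  CFC.sqrt (ContinuousLinearMap.adjoint A * A)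

/-- Real powers of an operator via continuous functional calculus. -/
noncomputable def opRpow (T : H →L[ℂ] H) (r : ℝ) : H →L[ℂ] H :=
  cfc (fun t : ℝ => t ^ r) T

set_option synthInstance.maxHeartbeats 1000000
set_option maxHeartbeats 1000000

open ContinuousLinearMap

lemma absOp_nonneg (A : H →L[ℂ] H) : 0 ≤ absOp A := CFC.sqrt_nonneg (a := adjoint A * A)

lemma absOp_sa (A : H →L[ℂ] H) : IsSelfAdjoint (absOp A) := .of_nonneg (absOp_nonneg A)

lemma absOp_sq (A : H →L[ℂ] H) : absOp A * absOp A = adjoint A * A := by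
  apply CFC.sqrt_mul_sqrt_self
  have := star_mul_self_nonneg A; rwa [star_eq_adjoint] at this

lemma norm_absOp_apply (A : H →L[ℂ] H) (x : H) : ‖absOp A x‖ = ‖A x‖ := by
  have h : (inner ℂ (absOp A x) (absOp A x) : ℂ) = inner ℂ (A x) (A x) := by
    have h1 : (inner ℂ (absOp A x) (absOp A x) : ℂ) = inner ℂ ((absOp A * absOp A) x) x := by
      rw [ContinuousLinearMap.mul_apply]
      rw [← adjoint_inner_left (absOp A), (absOp_sa A).adjoint_eq]
    rw [h1, absOp_sq, ContinuousLinearMap.mul_apply, adjoint_inner_left]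
  rw [inner_self_eq_norm_sq_to_K (𝕜 := ℂ), inner_self_eq_norm_sq_to_K (𝕜 := ℂ)] at h
  have h2 : (‖absOp A x‖ : ℝ) ^ 2 = ‖A x‖ ^ 2 := by exact_mod_cast h
  nlinarith [norm_nonneg (absOp A x), norm_nonneg (A x)]

lemma norm_comp_eq (A B : H →L[ℂ] H) : ‖absOp A * B‖ = ‖A * B‖ := by
  apply le_antisymm <;> apply opNorm_le_bound _ (norm_nonneg _)
  · intro x; rw [ContinuousLinearMap.mul_apply, norm_absOp_apply]; exact le_opNorm (A * B) x
  · intro x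
    have : ‖(A * B) x‖ = ‖(absOp A * B) x‖ := by rw [ContinuousLinearMap.mul_apply, ContinuousLinearMap.mul_apply, norm_absOp_apply]
    rw [this]; exact le_opNorm _ x

theorem stmt9 (A : H →L[ℂ] H) :
    ‖absOp A * absOp (ContinuousLinearMap.adjoint A) +
      absOp (ContinuousLinearMap.adjoint A) * absOp A‖ ≤ 2 * ‖A^2‖ := by
  set X := absOp A * absOp (adjoint A) with hX
  have hstar : absOp (adjoint A) * absOp A = star X := by
    rw [hX, star_mul, (absOp_sa A).star_eq, (absOp_sa (adjoint A)).star_eq]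
  have hXnorm : ‖X‖ = ‖A ^ 2‖ := by
    rw [hX, norm_comp_eq]
    rw [← norm_star (A * absOp (adjoint A)), star_mul, (absOp_sa (adjoint A)).star_eq,
      star_eq_adjoint, norm_comp_eq, ← norm_star (adjoint A * adjoint A), star_mul,
      star_eq_adjoint, adjoint_adjoint, ← sq]
  calc ‖X + absOp (adjoint A) * absOp A‖ ≤ ‖X‖ + ‖absOp (adjoint A) * absOp A‖ := norm_add_le _ _
    _ = 2 * ‖A ^ 2‖ := by rw [hstar, norm_star, hXnorm]; ring
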